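/- Let R → S be a ring map with S a finitely generated R-module, M a finitely generated R-module, and suppose R is Noetherian. If M ⊗_R R_red is flat over R_red and Tor_1^R(R_red, M) = 0, then M is flat over R, where R_red = R/nilradical(R). -/

import Mathlib

open CategoryTheory TensorProduct
open scoped TensorProduct

open LinearMap in

theorem aux_main {R M : Type} [CommRing R] [AddCommGroup M] [Module R M]
    (I : Ideal R) (k : ℕ) (hIk : I ^ k = ⊥)
    {P : Type} [AddCommGroup P] [Module R P] [Module.Projective R P]
    (π : P →ₗ[R] M) (hπ : Function.Surjective π)
    (hMproj : Module.Projective (R ⧸ I) ((R ⧸ I) ⊗[R] M))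
    (hinj : Function.Injective (lTensor (R ⧸ I) (ker π).subtype)) :
    Module.Projective R M := by
  set Q := R ⧸ I with hQ
  set K := ker π with hK
  set i : K →ₗ[R] P := K.subtype with hi
  set jQ : Q ⊗[R] K →ₗ[Q] Q ⊗[R] P := i.baseChange Q with hjQ
  set πQ : Q ⊗[R] P →ₗ[Q] Q ⊗[R] M := π.baseChange Q with hπQ
  have ej : ⇑jQ = ⇑(lTensor Q i) := rfl
  have eπ : ⇑πQ = ⇑(lTensor Q π) := rfl
  have hjQ_inj : Function.Injective jQ := by rw [ej]; exact hinj
  have hπQ_surj : Function.Surjective πQ := by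
    rw [eπ]; exact LinearMap.lTensor_surjective Q hπ
  have hexRP : Function.Exact i π := by
    rw [LinearMap.exact_iff, hi, Submodule.range_subtype, hK]
  have hex : Function.Exact jQ πQ := by
    have h1 : Function.Exact (lTensor Q i) (lTensor Q π) := lTensor_exact Q hexRP hπ
    intro y
    rw [show πQ y = lTensor Q π y from congrFun eπ y, h1 y]
    constructor
    · rintro ⟨x, hx⟩; exact ⟨x, by rw [show jQ x = lTensor Q i x from congrFun ej x]; exact hx⟩
    · rintro ⟨x, hx⟩; exact ⟨x, by rw [← show jQ x = lTensor Q i x from congrFun ej x]; exact hx⟩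
  -- a `Q`-linear section of `πQ`
  letI := hMproj
  obtain ⟨σ, hσ⟩ := Module.projective_lifting_property πQ LinearMap.id hπQ_surj
  have hσ' : ∀ y, πQ (σ y) = y := fun y => LinearMap.congr_fun hσ y
  -- a `Q`-linear retraction of `jQ`
  set ρ : Q ⊗[R] P →ₗ[Q] Q ⊗[R] P := LinearMap.id - σ ∘ₗ πQ with hρdef
  have hρmem : ∀ y, ρ y ∈ range jQ := by
    intro y
    rw [LinearMap.exact_iff] at hex
    rw [← hex]
    simp [hρdef, hσ']
  set eR : (Q ⊗[R] K) ≃ₗ[Q] range jQ := LinearEquiv.ofInjective jQ hjQ_inj with heR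
  set pbar : Q ⊗[R] P →ₗ[Q] Q ⊗[R] K :=
    (eR.symm : range jQ →ₗ[Q] Q ⊗[R] K) ∘ₗ (ρ.codRestrict (range jQ) hρmem) with hpbar
  have hpbar_jQ : ∀ x, pbar (jQ x) = x := by
    intro x
    have h0 : πQ (jQ x) = 0 := hex.apply_apply_eq_zero x
    have hρx : ρ (jQ x) = jQ x := by simp [hρdef, h0]
    have hcr : (ρ.codRestrict (range jQ) hρmem) (jQ x) = eR x := by
      apply Subtype.ext
      simp [hρx, heR]
    rw [hpbar]
    simp only [LinearMap.comp_apply, hcr, LinearEquiv.coe_coe, LinearEquiv.symm_apply_apply]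
  -- the element maps `x ↦ 1 ⊗ x`
  set mkK : K →ₗ[R] Q ⊗[R] K := TensorProduct.mk R Q K 1 with hmkK
  set mkP : P →ₗ[R] Q ⊗[R] P := TensorProduct.mk R Q P 1 with hmkP
  have hmkK_eq := quotTensorEquivQuotSMul_comp_mk (M := K) I
  have hmkK_eq' : ∀ x : K, quotTensorEquivQuotSMul K I (mkK x)
      = Submodule.mkQ (I • ⊤) x := fun x => LinearMap.congr_fun hmkK_eq x
  have hmkK_surj : Function.Surjective mkK := by
    intro z
    obtain ⟨w, hw⟩ := Submodule.mkQ_surjective (I • (⊤ : Submodule R K))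
      (quotTensorEquivQuotSMul K I z)
    exact ⟨w, (quotTensorEquivQuotSMul K I).injective (by rw [hmkK_eq' w, hw])⟩
  have hmkK_ker : ∀ x : K, mkK x = 0 → x ∈ (I • (⊤ : Submodule R K)) := by
    intro x hx
    have := hmkK_eq' x
    rw [hx, map_zero] at this
    rw [← Submodule.Quotient.mk_eq_zero]
    exact this.symm
  -- lift `pbar ∘ mkP` along `mkK`
  obtain ⟨p, hp⟩ := Module.projective_lifting_property mkK
    ((pbar.restrictScalars R) ∘ₗ mkP) hmkK_surj
  have hp' : ∀ y : P, mkK (p y) = pbar (mkP y) := fun y => LinearMap.congr_fun hp y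
  -- the endomorphism `g = p ∘ i` of `K` is `id` modulo `I • K`
  set g : Module.End R K := p ∘ₗ i with hg
  set h : Module.End R K := g - 1 with hh
  have hmkg : ∀ x : K, mkK (g x) = mkK x := by
    intro x
    have h1 : mkP (i x) = jQ (mkK x) := rfl
    have h2 : mkK (g x) = pbar (jQ (mkK x)) := by
      have := hp' (i x)
      rw [h1] at this
      simpa [hg] using this
    rw [h2, hpbar_jQ]
  have hhmem : ∀ x : K, h x ∈ (I • (⊤ : Submodule R K)) := by
    intro x
    apply hmkK_ker
    have hhx : h x = g x - x := rfl
    rw [hhx, map_sub, hmkg, sub_self]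
  -- `h` is nilpotent
  have hstep : ∀ (J : Ideal R) (y : K), y ∈ J • (⊤ : Submodule R K) →
      h y ∈ (J * I) • (⊤ : Submodule R K) := by
    intro J y hy
    rw [mul_smul]
    refine Submodule.smul_induction_on hy ?_ ?_
    · intro r hr n _
      rw [map_smul]
      exact Submodule.smul_mem_smul hr (hhmem n)
    · intro y1 y2 h1 h2
      rw [map_add]; exact Submodule.add_mem _ h1 h2
  have hpow : ∀ (n : ℕ) (x : K), (h ^ n) x ∈ (I ^ n) • (⊤ : Submodule R K) := by
    intro n
    induction n with
    | zero => intro x; simp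
    | succ n ih =>
      intro x
      have hx1 : (h ^ (n + 1)) x = h ((h ^ n) x) := by
        rw [pow_succ' h n]; rfl
      rw [hx1, pow_succ]
      exact hstep _ _ (ih x)
  have hnil : IsNilpotent h := by
    refine ⟨k, ?_⟩
    ext x
    have := hpow k x
    rw [hIk] at this
    simpa using this
  have hgunit : IsUnit g := by
    have hg1 : g = (1 : Module.End R K) + h := by rw [hh]; abel
    rw [hg1]
    exact hnil.isUnit_one_add
  obtain ⟨u, hu⟩ := hgunit
  set gi : Module.End R K := ↑u⁻¹ with hgi
  have hgi_g : ∀ x : K, gi (g x) = x := by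
    intro x
    have : gi * g = 1 := by rw [hgi, ← hu, Units.inv_mul]
    calc gi (g x) = (gi * g) x := rfl
    _ = x := by rw [this]; rfl
  set r : P →ₗ[R] K := gi ∘ₗ p with hr
  have hri : ∀ x : K, r (i x) = x := by
    intro x
    have : r (i x) = gi (g x) := rfl
    rw [this, hgi_g]
  -- the splitting of `π`
  set f : P →ₗ[R] P := LinearMap.id - i ∘ₗ r with hf
  have hKf : K ≤ ker f := by
    intro x hx
    have hix : i ⟨x, hx⟩ = x := rfl
    simp only [mem_ker, hf, LinearMap.sub_apply, LinearMap.id_apply, LinearMap.comp_apply]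
    rw [← hix, hri ⟨x, hx⟩, hix, sub_self]
  set e := π.quotKerEquivOfSurjective hπ with he
  set s : M →ₗ[R] P := (Submodule.liftQ K f hKf) ∘ₗ (e.symm : M →ₗ[R] P ⧸ K) with hs
  have hse : ∀ m, π (s m) = m := by
    intro m
    obtain ⟨y, hy⟩ := Submodule.Quotient.mk_surjective K (e.symm m)
    have hm : e (Submodule.Quotient.mk y) = m := by rw [hy]; simp
    have hm' : π y = m := by
      rw [← hm]
      rfl
    have hsm : s m = f y := by
      rw [hs]
      simp only [LinearMap.comp_apply, LinearEquiv.coe_coe, ← hy]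
      exact Submodule.liftQ_apply K f _
    rw [hsm]
    have hπf : π (f y) = π y := by
      have hmem : (↑(r y) : P) ∈ ker π := by rw [← hK]; exact (r y).2
      have : π (i (r y)) = 0 := mem_ker.mp hmem
      simp [hf, map_sub, this]
    rw [hπf, hm']
  exact Module.Projective.of_split s π (LinearMap.ext hse)

open LinearMap in

/-- Diagram chase: if `P₂ → P₁ → P₀ → M` is exact and stays exact at position 1 after
applying `Q ⊗ -`, then `Q ⊗ ker π → Q ⊗ P₀` is injective. -/
theorem aux_inj {R : Type} [CommRing R] {Q P2 P1 P0 Mm : Type}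
    [AddCommGroup Q] [Module R Q]
    [AddCommGroup P2] [Module R P2] [AddCommGroup P1] [Module R P1]
    [AddCommGroup P0] [Module R P0] [AddCommGroup Mm] [Module R Mm]
    (d2 : P2 →ₗ[R] P1) (d1 : P1 →ₗ[R] P0) (π : P0 →ₗ[R] Mm)
    (hex12 : Function.Exact d2 d1) (hex01 : Function.Exact d1 π)
    (hT : Function.Exact (lTensor Q d2) (lTensor Q d1)) :
    Function.Injective (lTensor Q (ker π).subtype) := by
  set K := ker π with hK
  set i : K →ₗ[R] P0 := K.subtype with hi
  set e : P1 →ₗ[R] K := d1.codRestrict K (fun x => by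
    rw [hK, mem_ker]; exact hex01.apply_apply_eq_zero x) with he
  have hie : i ∘ₗ e = d1 := rfl
  have he_surj : Function.Surjective e := by
    rintro ⟨y, hy⟩
    obtain ⟨x, hx⟩ := (hex01 y).mp (mem_ker.mp hy)
    exact ⟨x, Subtype.ext hx⟩
  have hed2 : e ∘ₗ d2 = 0 := by
    apply LinearMap.ext
    intro w
    apply Subtype.val_injective
    show d1 (d2 w) = ((0 : K) : P0)
    simpa using hex12.apply_apply_eq_zero w
  rw [injective_iff_map_eq_zero]
  intro x hx
  obtain ⟨y, rfl⟩ := lTensor_surjective Q he_surj x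
  have h1 : lTensor Q d1 y = 0 := by
    rw [← hie, lTensor_comp, LinearMap.comp_apply] at *
    exact hx
  obtain ⟨z, rfl⟩ := (hT y).mp h1
  rw [← LinearMap.comp_apply, ← lTensor_comp, hed2, lTensor_zero, LinearMap.zero_apply]

open LinearMap in
/-- Local criterion for flatness along a nilpotent thickening (cf. Matsumura Th. 22.3):
let `R → S` be a ring map with `S` a finitely generated `R`-module, `M` a finitely generated
`R`-module, and `R` Noetherian. If `M ⊗_R R_red` is flat over `R_red` and
`Tor₁^R(R_red, M) = 0`, then `M` is flat over `R`, where `R_red = R / nilradical R`. -/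
theorem stmt4 {R S M : Type} [CommRing R] [IsNoetherianRing R]
    [CommRing S] [Algebra R S] [Module.Finite R S]
    [AddCommGroup M] [Module R M] [Module.Finite R M]
    (hflat : Module.Flat (R ⧸ nilradical R) ((R ⧸ nilradical R) ⊗[R] M))
    (htor : Limits.IsZero
      (((Tor (ModuleCat R) 1).obj (ModuleCat.of R (R ⧸ nilradical R))).obj (ModuleCat.of R M))) :
    Module.Flat R M := by
  classical
  -- `Q ⊗ M` is projective over `Q = R ⧸ nilradical R`
  letI := hflat
  haveI : Module.FinitePresentation (R ⧸ nilradical R) ((R ⧸ nilradical R) ⊗[R] M) :=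
    Module.finitePresentation_of_finite _ _
  have hMproj : Module.Projective (R ⧸ nilradical R) ((R ⧸ nilradical R) ⊗[R] M) :=
    Module.freeLocus_eq_univ_iff.mp Module.freeLocus_eq_univ
  -- the nilradical is nilpotent
  obtain ⟨k, hk⟩ := IsNoetherianRing.isNilpotent_nilradical R
  -- choose a projective resolution of `M`
  let Mc : ModuleCat R := ModuleCat.of R M
  let P : ProjectiveResolution Mc := (HasProjectiveResolution.out (Z := Mc)).some
  let π0 : P.complex.X 0 →ₗ[R] M := (P.π.f 0).hom
  let d10 : P.complex.X 1 →ₗ[R] P.complex.X 0 := (P.complex.d 1 0).hom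
  let d21 : P.complex.X 2 →ₗ[R] P.complex.X 1 := (P.complex.d 2 1).hom
  have hπ0 : Function.Surjective π0 :=
    (ModuleCat.epi_iff_surjective (P.π.f 0)).mp inferInstance
  -- exactness of the resolution
  have hex01 : Function.Exact d10 π0 := by
    have hS : (ShortComplex.mk (P.complex.d 1 0) (P.π.f 0)
        P.complex_d_comp_π_f_zero).Exact :=
      ShortComplex.exact_of_g_is_cokernel _ P.isColimitCokernelCofork
    rw [ShortComplex.moduleCat_exact_iff_range_eq_ker] at hS
    rw [LinearMap.exact_iff]
    exact hS.symm
  have hex12 : Function.Exact d21 d10 := by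
    have hS := P.exact_succ 0
    rw [ShortComplex.moduleCat_exact_iff_range_eq_ker] at hS
    rw [LinearMap.exact_iff]
    exact hS.symm
  -- the tensored complex is exact at position 1, by vanishing of `Tor₁`
  set Qc : ModuleCat R := ModuleCat.of R (R ⧸ nilradical R) with hQc
  set F : ModuleCat R ⥤ ModuleCat R := (MonoidalCategory.tensoringLeft (ModuleCat R)).obj Qc with hF
  have htor' : Limits.IsZero ((F.leftDerived 1).obj Mc) := htor
  have hzero : Limits.IsZero
      ((HomologicalComplex.homologyFunctor (ModuleCat R) _ 1).obj
        ((F.mapHomologicalComplex _).obj P.complex)) :=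
    htor'.of_iso (P.isoLeftDerivedObj F 1).symm
  have hexactAt : ((F.mapHomologicalComplex _).obj P.complex).ExactAt 1 :=
    (HomologicalComplex.exactAt_iff_isZero_homology _ _).mpr hzero
  have hscExact := (HomologicalComplex.exactAt_iff' ((F.mapHomologicalComplex _).obj P.complex)
      2 1 0 (by simp) (by simp)).mp hexactAt
  rw [ShortComplex.moduleCat_exact_iff_range_eq_ker] at hscExact
  have hT : Function.Exact (lTensor (R ⧸ nilradical R) d21) (lTensor (R ⧸ nilradical R) d10) := by
    rw [LinearMap.exact_iff]
    exact hscExact.symm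
  -- conclude
  have hinj := aux_inj (Q := R ⧸ nilradical R) d21 d10 π0 hex12 hex01 hT
  haveI : Module.Projective R (P.complex.X 0) :=
    (IsProjective.iff_projective _).mpr (P.projective 0)
  haveI hproj : Module.Projective R M := by
    refine aux_main (nilradical R) k ?_ π0 hπ0 hMproj hinj
    simpa using hk
  exact Module.Flat.of_projective
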